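/- There exist universal constants C₀ > 0 (sufficiently small) and c > 0 such that the following holds. Let δ > 0, 0 < C < 1/2, and positive integers i, k, m satisfy 1 ≤ i ≤ k, i even, and k² ≤ C₀ C² m. Then (δ/m) · |Σ_{x=0}^m 2^{−m} binom(m,x) · h(m,x) · P_i((x − m/2)/(Cm))| ≤ c · δ i^{3/2} / (C² m), where h(m,x) := 2x² − 2mx + m(m−1)/2. -/

import Mathlib

open Finset

/-- `h(n,x) = 2x² − 2nx + n(n−1)/2`. -/
noncomputable def hIsing (n x : ℕ) : ℝ :=
  2 * (x : ℝ) ^ 2 - 2 * (n : ℝ) * (x : ℝ) + (n : ℝ) * ((n : ℝ) - 1) / 2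

/-- The `i`-th Legendre polynomial (as a function), via its explicit expansion
`P_i(x) = 2^{−i} Σ_{j=0}^{⌊i/2⌋} (−1)^j binom(i,j) binom(2i−2j, i) x^{i−2j}`. -/
noncomputable def legendre (i : ℕ) (x : ℝ) : ℝ :=
  ((2 : ℝ) ^ i)⁻¹ * ∑ j ∈ Finset.range (i / 2 + 1),
    (-1 : ℝ) ^ j * (i.choose j : ℝ) * ((2 * i - 2 * j).choose i : ℝ) * x ^ (i - 2 * j)

open Nat

lemma two_pow_mul_factorial_le (r : ℕ) : 2 ^ r * r ! ≤ (2 * r)! := by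
  induction r with
  | zero => simp
  | succ n ih =>
    have h2 : 2 * (n + 1) = 2 * n + 1 + 1 := by ring
    rw [h2, Nat.factorial_succ, Nat.factorial_succ, Nat.factorial_succ]
    calc 2 ^ (n + 1) * ((n + 1) * n !) = (n + 1) * 2 * (2 ^ n * n !) := by ring
      _ ≤ (n + 1) * 2 * (2 * n)! := Nat.mul_le_mul_left _ ih
      _ = (2 * n + 1 + 1) * (2 * n)! := by ring
      _ ≤ (2 * n + 1 + 1) * ((2 * n + 1) * (2 * n)!) :=
          Nat.mul_le_mul_left _ (Nat.le_mul_of_pos_left _ (Nat.succ_pos _))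

noncomputable def dd (s : ℕ) : ℝ := (2 * s)! / (2 ^ s * s !)

lemma dd_pos (s : ℕ) : 0 < dd s := by
  unfold dd; positivity

lemma one_le_dd (s : ℕ) : 1 ≤ dd s := by
  unfold dd
  rw [le_div_iff₀ (by positivity), one_mul]
  exact_mod_cast two_pow_mul_factorial_le s

lemma dd_succ (s : ℕ) : dd (s + 1) = (2 * s + 1) * dd s := by
  unfold dd
  have h2 : 2 * (s + 1) = 2 * s + 1 + 1 := by ring
  rw [h2, Nat.factorial_succ, Nat.factorial_succ, Nat.factorial_succ]
  push_cast
  field_simp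
  ring

lemma dd_mono (s : ℕ) : dd s ≤ dd (s + 1) := by
  rw [dd_succ]
  nlinarith [dd_pos s]

lemma dd_choose_ident (t r : ℕ) :
    dd (t + r) * ((t + r).choose t : ℝ) = ((2 * (t + r)).choose (2 * t) : ℝ) * dd t * dd r := by
  unfold dd
  rw [Nat.cast_choose ℝ (Nat.le_add_right t r), Nat.cast_choose ℝ (by omega : 2 * t ≤ 2 * (t + r))]
  have h1 : t + r - t = r := by omega
  have h2 : 2 * (t + r) - 2 * t = 2 * r := by omega
  rw [h1, h2]
  have e1 : (2 : ℝ) ^ (t + r) = 2 ^ t * 2 ^ r := by rw [pow_add]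
  rw [e1]
  field_simp

lemma dd_choose_le {t s : ℕ} (h : t ≤ s) :
    ((2 * s).choose (2 * t) : ℝ) * dd t ≤ dd s * (s.choose t : ℝ) := by
  obtain ⟨r, rfl⟩ := Nat.exists_eq_add_of_le h
  have := dd_choose_ident t r
  rw [this]
  have hnn : (0:ℝ) ≤ ((2 * (t + r)).choose (2 * t) : ℝ) * dd t :=
    mul_nonneg (Nat.cast_nonneg _) (dd_pos t).le
  nlinarith [one_le_dd r]

lemma conv_step (m : ℕ) (g : ℕ → ℝ) :
    ∑ x ∈ range (m + 2), ((m + 1).choose x : ℝ) * g x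
      = ∑ x ∈ range (m + 1), (m.choose x : ℝ) * (g x + g (x + 1)) := by
  rw [Finset.sum_range_succ' (fun x => ((m + 1).choose x : ℝ) * g x)]
  have h1 : ∀ x ∈ range (m + 1), ((m + 1).choose (x + 1) : ℝ) * g (x + 1)
      = (m.choose x : ℝ) * g (x + 1) + (m.choose (x + 1) : ℝ) * g (x + 1) := by
    intro x _
    rw [Nat.choose_succ_succ]
    push_cast
    ring
  rw [Finset.sum_congr rfl h1, Finset.sum_add_distrib]
  have h2 : ∑ x ∈ range (m + 1), ((m.choose (x + 1) : ℝ) * g (x + 1))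
      + ((m + 1).choose 0 : ℝ) * g 0 = ∑ x ∈ range (m + 1), (m.choose x : ℝ) * g x := by
    have h3 := Finset.sum_range_succ' (fun x => (m.choose x : ℝ) * g x) (m + 1)
    rw [Finset.sum_range_succ (fun x => (m.choose x : ℝ) * g x) (m + 1)] at h3
    simp only [Nat.choose_succ_self, Nat.cast_zero, zero_mul, add_zero] at h3
    simpa using h3.symm
  rw [add_assoc]
  rw [Finset.sum_congr rfl (fun x _ => mul_add ((m.choose x : ℝ)) (g x) (g (x+1))),
    Finset.sum_add_distrib]
  rw [← h2]
  ring

lemma sum_even_vanish (f : ℕ → ℝ) (hf : ∀ j, Odd j → f j = 0) (n : ℕ) :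
    ∑ j ∈ range (2 * n + 1), f j = ∑ t ∈ range (n + 1), f (2 * t) := by
  induction n with
  | zero => simp
  | succ n ih =>
    have h1 : 2 * (n + 1) + 1 = (2 * n + 1) + 1 + 1 := by ring
    rw [h1, Finset.sum_range_succ, Finset.sum_range_succ, ih, Finset.sum_range_succ,
      hf (2 * n + 1) ⟨n, by ring⟩]
    have : 2 * n + 1 + 1 = 2 * (n + 1) := by ring
    rw [this]
    simp [Finset.sum_range_succ]

lemma pair_pow (s : ℕ) (u : ℝ) :
    (u - 1 / 2) ^ (2 * s) + (u + 1 / 2) ^ (2 * s)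
      = 2 * ∑ t ∈ range (s + 1),
          ((2 * s).choose (2 * t) : ℝ) * u ^ (2 * t) * (1 / 4) ^ (s - t) := by
  have hminus : u - 1 / 2 = u + (-(1 / 2)) := by ring
  rw [hminus, add_pow, add_pow, ← Finset.sum_add_distrib]
  have hvan : ∀ j, Odd j →
      (u ^ j * (-(1 / 2) : ℝ) ^ (2 * s - j) * ((2 * s).choose j : ℝ)
        + u ^ j * (1 / 2 : ℝ) ^ (2 * s - j) * ((2 * s).choose j : ℝ)) = 0 := by
    intro j hj
    rcases le_or_gt j (2 * s) with hle | hlt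
    · have hodd : Odd (2 * s - j) := by
        rcases hj with ⟨a, rfl⟩
        exact ⟨s - a - 1, by omega⟩
      rw [hodd.neg_pow]
      ring
    · rw [Nat.choose_eq_zero_of_lt hlt]
      simp
  rw [sum_even_vanish _ hvan s, Finset.mul_sum]
  apply Finset.sum_congr rfl
  intro t ht
  have htle : t ≤ s := by
    simpa using Finset.mem_range_succ_iff.mp ht
  have heven : Even (2 * s - 2 * t) := ⟨s - t, by omega⟩
  rw [heven.neg_pow]
  have h2 : 2 * s - 2 * t = 2 * (s - t) := by omega
  have h4 : ((1:ℝ)/2) ^ (2 * (s - t)) = (1/4) ^ (s - t) := by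
    rw [pow_mul]; norm_num
  rw [h2, h4]
  ring
noncomputable def Mc (m n : ℕ) : ℝ :=
  ∑ x ∈ range (m + 1), (m.choose x : ℝ) * ((x : ℝ) - (m : ℝ) / 2) ^ n

lemma Mc_nonneg (m s : ℕ) : 0 ≤ Mc m (2 * s) := by
  unfold Mc
  apply Finset.sum_nonneg
  intro x _
  apply mul_nonneg (Nat.cast_nonneg _)
  rw [pow_mul]
  positivity

lemma Mc_zero (m : ℕ) : Mc m 0 = 2 ^ m := by
  unfold Mc
  simp only [pow_zero, mul_one]
  rw [← Nat.cast_sum]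
  rw [Nat.sum_range_choose]
  push_cast
  ring

lemma Mc_succ_shift (m n : ℕ) :
    Mc (m + 1) n = ∑ x ∈ range (m + 1), (m.choose x : ℝ) *
      ((((x : ℝ) - (m : ℝ) / 2) - 1 / 2) ^ n + (((x : ℝ) - (m : ℝ) / 2) + 1 / 2) ^ n) := by
  unfold Mc
  push_cast
  rw [conv_step m (fun x => ((x : ℝ) - ((m : ℝ) + 1) / 2) ^ n)]
  apply Finset.sum_congr rfl
  intro x _
  have e1 : ((x : ℝ) - ((m : ℝ) + 1) / 2) = (((x : ℝ) - (m : ℝ) / 2) - 1 / 2) := by ring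
  have e2 : ((((x : ℕ) + 1 : ℕ) : ℝ) - ((m : ℝ) + 1) / 2) = (((x : ℝ) - (m : ℝ) / 2) + 1 / 2) := by
    push_cast; ring
  rw [e1, e2]

lemma Mc_two (m : ℕ) : Mc m 2 = 2 ^ m * (m : ℝ) / 4 := by
  induction m with
  | zero => simp [Mc]
  | succ m ih =>
    rw [Mc_succ_shift]
    have : ∀ x ∈ range (m + 1), (m.choose x : ℝ) *
        ((((x : ℝ) - (m : ℝ) / 2) - 1 / 2) ^ 2 + (((x : ℝ) - (m : ℝ) / 2) + 1 / 2) ^ 2)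
        = 2 * ((m.choose x : ℝ) * ((x : ℝ) - (m : ℝ) / 2) ^ 2) + (1 / 2) * (m.choose x : ℝ) := by
      intro x _
      ring
    rw [Finset.sum_congr rfl this, Finset.sum_add_distrib, ← Finset.mul_sum, ← Finset.mul_sum]
    have hM : ∑ x ∈ range (m + 1), (m.choose x : ℝ) * ((x : ℝ) - (m : ℝ) / 2) ^ 2 = Mc m 2 := rfl
    have hch : ∑ x ∈ range (m + 1), (m.choose x : ℝ) = 2 ^ m := by
      rw [← Nat.cast_sum, Nat.sum_range_choose]; push_cast; ring
    rw [hM, hch, ih]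
    push_cast
    ring

lemma Mc_le (m s : ℕ) : Mc m (2 * s) ≤ 2 ^ m * dd s * ((m : ℝ) / 4) ^ s := by
  induction m generalizing s with
  | zero =>
    cases s with
    | zero => simp [Mc, dd]
    | succ s =>
      have : Mc 0 (2 * (s + 1)) = 0 := by
        unfold Mc; simp
      rw [this]
      simp
  | succ m ih =>
    rw [Mc_succ_shift]
    have hexp : ∀ x ∈ range (m + 1), (m.choose x : ℝ) *
        ((((x : ℝ) - (m : ℝ) / 2) - 1 / 2) ^ (2 * s) + (((x : ℝ) - (m : ℝ) / 2) + 1 / 2) ^ (2 * s))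
        = ∑ t ∈ range (s + 1), 2 * ((2 * s).choose (2 * t) : ℝ) * (1 / 4) ^ (s - t)
            * ((m.choose x : ℝ) * ((x : ℝ) - (m : ℝ) / 2) ^ (2 * t)) := by
      intro x _
      rw [pair_pow s ((x : ℝ) - (m : ℝ) / 2), Finset.mul_sum, Finset.mul_sum]
      apply Finset.sum_congr rfl
      intro t _
      ring
    rw [Finset.sum_congr rfl hexp, Finset.sum_comm]
    have hswap : ∀ t ∈ range (s + 1),
        ∑ x ∈ range (m + 1), 2 * ((2 * s).choose (2 * t) : ℝ) * (1 / 4) ^ (s - t)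
            * ((m.choose x : ℝ) * ((x : ℝ) - (m : ℝ) / 2) ^ (2 * t))
        = 2 * ((2 * s).choose (2 * t) : ℝ) * (1 / 4) ^ (s - t) * Mc m (2 * t) := by
      intro t _
      rw [← Finset.mul_sum]
      rfl
    rw [Finset.sum_congr rfl hswap]
    have hterm : ∀ t ∈ range (s + 1),
        2 * ((2 * s).choose (2 * t) : ℝ) * (1 / 4) ^ (s - t) * Mc m (2 * t)
        ≤ 2 * dd s * (s.choose t : ℝ) * (1 / 4) ^ (s - t) * (2 ^ m * ((m : ℝ) / 4) ^ t) := by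
      intro t ht
      have htle : t ≤ s := Finset.mem_range_succ_iff.mp ht
      have h1 : Mc m (2 * t) ≤ 2 ^ m * dd t * ((m : ℝ) / 4) ^ t := ih t
      have h2 := dd_choose_le htle
      have hMnn := Mc_nonneg m t
      have hq : (0:ℝ) < (1 / 4) ^ (s - t) := by positivity
      calc 2 * ((2 * s).choose (2 * t) : ℝ) * (1 / 4) ^ (s - t) * Mc m (2 * t)
          ≤ 2 * ((2 * s).choose (2 * t) : ℝ) * (1 / 4) ^ (s - t) * (2 ^ m * dd t * ((m : ℝ) / 4) ^ t) := by
            apply mul_le_mul_of_nonneg_left h1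
            positivity
        _ = 2 * (((2 * s).choose (2 * t) : ℝ) * dd t) * (1 / 4) ^ (s - t) * (2 ^ m * ((m : ℝ) / 4) ^ t) := by
            ring
        _ ≤ 2 * (dd s * (s.choose t : ℝ)) * (1 / 4) ^ (s - t) * (2 ^ m * ((m : ℝ) / 4) ^ t) := by
            apply mul_le_mul_of_nonneg_right _ (by positivity)
            apply mul_le_mul_of_nonneg_right _ (by positivity)
            nlinarith
        _ = 2 * dd s * (s.choose t : ℝ) * (1 / 4) ^ (s - t) * (2 ^ m * ((m : ℝ) / 4) ^ t) := by ring
    calc ∑ t ∈ range (s + 1), 2 * ((2 * s).choose (2 * t) : ℝ) * (1 / 4) ^ (s - t) * Mc m (2 * t)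
        ≤ ∑ t ∈ range (s + 1),
            2 * dd s * (s.choose t : ℝ) * (1 / 4) ^ (s - t) * (2 ^ m * ((m : ℝ) / 4) ^ t) :=
          Finset.sum_le_sum hterm
      _ = 2 ^ (m + 1) * dd s * (1 / 4) ^ s *
            ∑ t ∈ range (s + 1), ((m : ℝ)) ^ t * 1 ^ (s - t) * (s.choose t : ℝ) := by
          rw [Finset.mul_sum]
          apply Finset.sum_congr rfl
          intro t ht
          have htle : t ≤ s := Finset.mem_range_succ_iff.mp ht
          have e : ((1:ℝ) / 4) ^ s = (1 / 4) ^ (s - t) * (1 / 4) ^ t := by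
            rw [← pow_add]
            congr 1
            omega
          rw [e]
          ring
      _ = 2 ^ (m + 1) * dd s * (1 / 4) ^ s * ((m : ℝ) + 1) ^ s := by
          rw [← add_pow]
      _ = 2 ^ (m + 1) * dd s * (((m : ℝ) + 1) / 4) ^ s := by
          rw [mul_assoc, ← mul_pow]
          ring_nf
      _ = 2 ^ (m + 1) * dd s * ((((m + 1 : ℕ)) : ℝ) / 4) ^ s := by push_cast; ring

lemma cb_sq (r : ℕ) : ((Nat.centralBinom r : ℝ)) ^ 2 * (3 * r + 1) ≤ 16 ^ r := by
  induction r with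
  | zero => simp [Nat.centralBinom]
  | succ r ih =>
    have hrec : ((r : ℝ) + 1) * (Nat.centralBinom (r + 1) : ℝ)
        = 2 * (2 * r + 1) * (Nat.centralBinom r : ℝ) := by
      exact_mod_cast congrArg (fun n : ℕ => (n : ℝ)) (Nat.succ_mul_centralBinom_succ r)
    have hpos : (0:ℝ) < ((r:ℝ) + 1) ^ 2 * (3 * r + 1) := by positivity
    rw [← mul_le_mul_iff_of_pos_right hpos]
    have h16 : (0:ℝ) ≤ 16 ^ r := by positivity
    have hsq : ((((r:ℝ) + 1) * (Nat.centralBinom (r + 1) : ℝ))) ^ 2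
        = (2 * (2 * (r:ℝ) + 1) * (Nat.centralBinom r : ℝ)) ^ 2 := by rw [hrec]
    have hr0 : (0:ℝ) ≤ (r : ℝ) := Nat.cast_nonneg r
    calc ((Nat.centralBinom (r+1) : ℝ)) ^ 2 * (3 * ↑(r+1) + 1) * (((r:ℝ) + 1) ^ 2 * (3 * r + 1))
        = 4 * (2 * (r:ℝ) + 1) ^ 2 * (3 * r + 4) * (((Nat.centralBinom r : ℝ)) ^ 2 * (3 * r + 1)) := by
          push_cast
          linear_combination (3 * (r:ℝ) + 4) * (3 * r + 1) * hsq
      _ ≤ 4 * (2 * (r:ℝ) + 1) ^ 2 * (3 * r + 4) * 16 ^ r := by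
          apply mul_le_mul_of_nonneg_left ih
          positivity
      _ ≤ (16 * (((r:ℝ) + 1) ^ 2 * (3 * r + 1))) * 16 ^ r := by
          apply mul_le_mul_of_nonneg_right _ h16
          nlinarith [hr0]
      _ = 16 ^ (r + 1) * (((r:ℝ) + 1) ^ 2 * (3 * r + 1)) := by
          rw [pow_succ]; ring

lemma choose_sqrt (r j : ℕ) (hr : 1 ≤ r) :
    ((2:ℝ) ^ (2 * r))⁻¹ * ((2 * r).choose j : ℝ) ≤ (Real.sqrt ((2 * r : ℕ) : ℝ))⁻¹ := by
  have hr0 : (0:ℝ) < ((2 * r : ℕ) : ℝ) := by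
    have : 0 < 2 * r := by omega
    exact_mod_cast this
  have hs : 0 < Real.sqrt ((2 * r : ℕ) : ℝ) := Real.sqrt_pos.mpr hr0
  have hch : ((2 * r).choose j : ℝ) ≤ (Nat.centralBinom r : ℝ) := by
    have h1 : (2 * r).choose j ≤ (2 * r).choose ((2 * r) / 2) := Nat.choose_le_middle j (2 * r)
    have h2 : (2 * r) / 2 = r := by omega
    rw [h2] at h1
    exact_mod_cast h1
  have hcb : (0:ℝ) ≤ (Nat.centralBinom r : ℝ) := Nat.cast_nonneg _
  have key : (Nat.centralBinom r : ℝ) * Real.sqrt ((2 * r : ℕ) : ℝ) ≤ 2 ^ (2 * r) := by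
    have e1 : (Nat.centralBinom r : ℝ) * Real.sqrt ((2 * r : ℕ) : ℝ)
        = Real.sqrt ((Nat.centralBinom r : ℝ) ^ 2 * ((2 * r : ℕ) : ℝ)) := by
      rw [Real.sqrt_mul (by positivity), Real.sqrt_sq hcb]
    rw [e1]
    have e2 : ((2:ℝ)) ^ (2 * r) = Real.sqrt (16 ^ r) := by
      have : (16:ℝ) ^ r = ((2:ℝ) ^ (2 * r)) ^ 2 := by
        rw [← pow_mul, show 2 * r * 2 = 4 * r by ring, pow_mul]
        norm_num
      rw [this, Real.sqrt_sq (by positivity)]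
    rw [e2]
    apply Real.sqrt_le_sqrt
    calc (Nat.centralBinom r : ℝ) ^ 2 * ((2 * r : ℕ) : ℝ)
        ≤ (Nat.centralBinom r : ℝ) ^ 2 * (3 * r + 1) := by
          apply mul_le_mul_of_nonneg_left _ (by positivity)
          push_cast
          linarith [Nat.cast_nonneg r (α := ℝ)]
      _ ≤ 16 ^ r := cb_sq r
  rw [inv_mul_le_iff₀ (by positivity)]
  rw [← div_eq_mul_inv, le_div_iff₀ hs]
  calc ((2 * r).choose j : ℝ) * Real.sqrt ((2 * r : ℕ) : ℝ)
      ≤ (Nat.centralBinom r : ℝ) * Real.sqrt ((2 * r : ℕ) : ℝ) :=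
        mul_le_mul_of_nonneg_right hch hs.le
    _ ≤ 2 ^ (2 * r) := key

lemma two_s_one (s : ℕ) : 2 * s + 1 ≤ 2 ^ (s + 1) * s ! := by
  induction s with
  | zero => simp
  | succ s ih =>
    have h1 : 2 ^ (s + 1 + 1) * (s + 1)! = 2 * (s + 1) * (2 ^ (s + 1) * s !) := by
      rw [Nat.factorial_succ]; ring
    rw [h1]
    have h2 : 2 ≤ 2 ^ (s + 1) * s ! := by
      have ha : 2 ≤ 2 ^ (s + 1) := by
        calc 2 = 2 ^ 1 := by norm_num
          _ ≤ 2 ^ (s + 1) := Nat.pow_le_pow_right (by norm_num) (by omega)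
      calc 2 ≤ 2 ^ (s + 1) := ha
        _ = 2 ^ (s + 1) * 1 := by ring
        _ ≤ 2 ^ (s + 1) * s ! := Nat.mul_le_mul_left _ (Nat.one_le_iff_ne_zero.mpr s.factorial_ne_zero)
    calc 2 * (s + 1) + 1 = (2 * s + 1) + 2 := by ring
      _ ≤ 2 ^ (s + 1) * s ! + 2 ^ (s + 1) * s ! := Nat.add_le_add ih h2
      _ = 2 * (2 ^ (s + 1) * s !) := by ring
      _ ≤ 2 * (s + 1) * (2 ^ (s + 1) * s !) := by
          apply Nat.mul_le_mul_right
          omega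

lemma dd_succ_le (s : ℕ) : dd (s + 1) ≤ 2 * ((2 * s)! : ℝ) := by
  unfold dd
  rw [div_le_iff₀ (by positivity)]
  have hnat : (2 * (s + 1))! ≤ 2 * (2 * s)! * (2 ^ (s + 1) * (s + 1)!) := by
    have h2 : 2 * (s + 1) = 2 * s + 1 + 1 := by ring
    rw [h2, Nat.factorial_succ, Nat.factorial_succ, Nat.factorial_succ]
    calc (2 * s + 1 + 1) * ((2 * s + 1) * (2 * s)!)
        = (2 * s + 1 + 1) * (2 * s + 1) * (2 * s)! := by ring
      _ ≤ (2 * (s + 1)) * (2 ^ (s + 1) * s !) * (2 * s)! := by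
          apply Nat.mul_le_mul_right
          have : 2 * s + 1 + 1 = 2 * (s + 1) := by ring
          rw [this]
          exact Nat.mul_le_mul_left _ (two_s_one s)
      _ = 2 * (2 * s)! * (2 ^ (s + 1) * ((s + 1) * s !)) := by ring
  exact_mod_cast hnat

lemma geom_half_le_two (n : ℕ) : ∑ t ∈ range n, ((1:ℝ) / 2) ^ t ≤ 2 := by
  have h : ∀ n : ℕ, ∑ t ∈ range n, ((1:ℝ) / 2) ^ t = 2 - 2 * (1 / 2) ^ n := by
    intro n
    induction n with
    | zero => simp
    | succ n ih => rw [Finset.sum_range_succ, ih]; ring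
  rw [h]
  have : (0:ℝ) ≤ (1/2) ^ n := by positivity
  linarith


/-- Bound on the first-order term in the Ising moment-matching analysis for even `i`,
where `G'_{m,x}(0) = 2^{−m} binom(m,x) h(m,x)`. -/
theorem ising_first_order_bound :
    ∃ C₀ c : ℝ, 0 < C₀ ∧ 0 < c ∧
    ∀ (δ C : ℝ) (i k m : ℕ),
      0 < δ → 0 < C → C < 1 / 2 → 1 ≤ i → i ≤ k → Even i → 0 < m →
      (k : ℝ) ^ 2 ≤ C₀ * C ^ 2 * m →
      (δ / m) *
        |∑ x ∈ Finset.range (m + 1),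
          ((2 : ℝ) ^ m)⁻¹ * (m.choose x : ℝ) * hIsing m x *
            legendre i (((x : ℝ) - (m : ℝ) / 2) / (C * m))| ≤
      c * δ * (i : ℝ) ^ ((3 : ℝ) / 2) / (C ^ 2 * m) := by
  refine ⟨1/2, 4, by norm_num, by norm_num, ?_⟩
  intro δ C i k m hδ hC hC2 hi1 hik hEven hm hk2
  -- basic setup
  obtain ⟨r, hirr⟩ := hEven
  have hi2 : i = 2 * r := by omega
  have hr1 : 1 ≤ r := by omega
  have hmR : (0:ℝ) < (m:ℝ) := by exact_mod_cast hm
  have hCm : (0:ℝ) < C * (m:ℝ) := by positivity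
  have hiR : (0:ℝ) < (i:ℝ) := by exact_mod_cast (by omega : 0 < i)
  have hsq : (0:ℝ) < Real.sqrt i := Real.sqrt_pos.mpr hiR
  -- Q bound
  have hQ : (i:ℝ)^2 / (C^2 * m) ≤ 1/2 := by
    rw [div_le_iff₀ (by positivity)]
    have hik' : (i:ℝ)^2 ≤ (k:ℝ)^2 := by
      have : (i:ℝ) ≤ (k:ℝ) := by exact_mod_cast hik
      nlinarith [hiR.le]
    nlinarith [hk2]
  set u : ℕ → ℝ := fun x => (x:ℝ) - (m:ℝ)/2 with hu
  set A : ℕ → ℝ := fun n => ∑ x ∈ range (m+1),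
      (m.choose x : ℝ) * (2 * u x ^ 2 - (m:ℝ)/2) * u x ^ n with hA
  have hAM : ∀ n, A n = 2 * Mc m (n + 2) - (m:ℝ)/2 * Mc m n := by
    intro n
    rw [hA]
    unfold Mc
    rw [Finset.mul_sum, Finset.mul_sum, ← Finset.sum_sub_distrib]
    apply Finset.sum_congr rfl
    intro x _
    rw [pow_add]
    ring
  have hA0 : A 0 = 0 := by
    rw [hAM, Mc_two, Mc_zero]
    ring
  have hAbound : ∀ s : ℕ, |A (2*s)| ≤ 2^m * ((m:ℝ)/4)^s * ((m:ℝ) * dd (s+1)) := by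
    intro s
    have h1 : A (2*s) = 2 * Mc m (2*(s+1)) - (m:ℝ)/2 * Mc m (2*s) := by
      have e : 2*s + 2 = 2*(s+1) := by omega
      rw [hAM, e]
    have h2 := Mc_le m (s+1)
    have h3 := Mc_le m s
    have h4 := Mc_nonneg m (s+1)
    have h5 := Mc_nonneg m s
    have h6 := dd_mono s
    have h7 := (dd_pos (s+1)).le
    have h8 := (dd_pos s).le
    have hps : ((m:ℝ)/4)^(s+1) = ((m:ℝ)/4)^s * ((m:ℝ)/4) := pow_succ _ _
    have h2' : 2 * Mc m (2*(s+1)) ≤ 2^m * ((m:ℝ)/4)^s * (((m:ℝ)/2) * dd (s+1)) := by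
      calc 2 * Mc m (2*(s+1)) ≤ 2 * (2^m * dd (s+1) * ((m:ℝ)/4)^(s+1)) := by linarith
        _ = 2^m * ((m:ℝ)/4)^s * (((m:ℝ)/2) * dd (s+1)) := by rw [hps]; ring
    have h3' : (m:ℝ)/2 * Mc m (2*s) ≤ 2^m * ((m:ℝ)/4)^s * (((m:ℝ)/2) * dd (s+1)) := by
      calc (m:ℝ)/2 * Mc m (2*s) ≤ (m:ℝ)/2 * (2^m * dd s * ((m:ℝ)/4)^s) :=
            mul_le_mul_of_nonneg_left h3 (by positivity)
        _ = ((m:ℝ)/2 * 2^m * ((m:ℝ)/4)^s) * dd s := by ring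
        _ ≤ ((m:ℝ)/2 * 2^m * ((m:ℝ)/4)^s) * dd (s+1) :=
            mul_le_mul_of_nonneg_left h6 (by positivity)
        _ = 2^m * ((m:ℝ)/4)^s * (((m:ℝ)/2) * dd (s+1)) := by ring
    have ha : (0:ℝ) ≤ 2 * Mc m (2*(s+1)) := by linarith
    have hb : (0:ℝ) ≤ (m:ℝ)/2 * Mc m (2*s) := mul_nonneg (by positivity) h5
    have hT : (0:ℝ) ≤ 2^m * ((m:ℝ)/4)^s * (((m:ℝ)/2) * dd (s+1)) := by
      apply mul_nonneg (by positivity)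
      exact mul_nonneg (by positivity) h7
    rw [h1]
    have habs2 : |2 * Mc m (2*(s+1)) - (m:ℝ)/2 * Mc m (2*s)|
        ≤ 2^m * ((m:ℝ)/4)^s * (((m:ℝ)/2) * dd (s+1))
          + 2^m * ((m:ℝ)/4)^s * (((m:ℝ)/2) * dd (s+1)) := by
      rw [abs_le]
      constructor <;> linarith
    calc |2 * Mc m (2*(s+1)) - (m:ℝ)/2 * Mc m (2*s)|
        ≤ 2^m * ((m:ℝ)/4)^s * (((m:ℝ)/2) * dd (s+1))
          + 2^m * ((m:ℝ)/4)^s * (((m:ℝ)/2) * dd (s+1)) := habs2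
      _ = 2^m * ((m:ℝ)/4)^s * ((m:ℝ) * dd (s+1)) := by ring
  -- rewrite the sum
  have hS : ∑ x ∈ Finset.range (m + 1),
        ((2 : ℝ) ^ m)⁻¹ * (m.choose x : ℝ) * hIsing m x *
          legendre i (((x : ℝ) - (m : ℝ) / 2) / (C * m))
      = ∑ j ∈ range (i/2 + 1), ((2:ℝ)^i)⁻¹ *
          ((-1:ℝ)^j * (i.choose j : ℝ) * ((2*i - 2*j).choose i : ℝ)) *
          (((C*(m:ℝ))^(i - 2*j))⁻¹ * (((2:ℝ)^m)⁻¹ * A (i - 2*j))) := by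
    unfold legendre
    calc ∑ x ∈ range (m + 1), ((2 : ℝ) ^ m)⁻¹ * (m.choose x : ℝ) * hIsing m x *
          (((2 : ℝ) ^ i)⁻¹ * ∑ j ∈ range (i / 2 + 1),
            (-1 : ℝ) ^ j * (i.choose j : ℝ) * ((2 * i - 2 * j).choose i : ℝ) *
              ((((x : ℝ) - (m : ℝ) / 2) / (C * m)) ^ (i - 2 * j)))
        = ∑ x ∈ range (m + 1), ∑ j ∈ range (i / 2 + 1),
            ((2 : ℝ) ^ m)⁻¹ * (m.choose x : ℝ) * hIsing m x *
            (((2 : ℝ) ^ i)⁻¹ * ((-1 : ℝ) ^ j * (i.choose j : ℝ) *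
              ((2 * i - 2 * j).choose i : ℝ) *
              ((((x : ℝ) - (m : ℝ) / 2) / (C * m)) ^ (i - 2 * j)))) := by
          apply Finset.sum_congr rfl
          intro x _
          rw [Finset.mul_sum, Finset.mul_sum]
      _ = ∑ j ∈ range (i / 2 + 1), ∑ x ∈ range (m + 1),
            ((2 : ℝ) ^ m)⁻¹ * (m.choose x : ℝ) * hIsing m x *
            (((2 : ℝ) ^ i)⁻¹ * ((-1 : ℝ) ^ j * (i.choose j : ℝ) *
              ((2 * i - 2 * j).choose i : ℝ) *
              ((((x : ℝ) - (m : ℝ) / 2) / (C * m)) ^ (i - 2 * j)))) := Finset.sum_comm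
      _ = ∑ j ∈ range (i/2 + 1), ((2:ℝ)^i)⁻¹ *
            ((-1:ℝ)^j * (i.choose j : ℝ) * ((2*i - 2*j).choose i : ℝ)) *
            (((C*(m:ℝ))^(i - 2*j))⁻¹ * (((2:ℝ)^m)⁻¹ * A (i - 2*j))) := by
          apply Finset.sum_congr rfl
          intro j _
          rw [hA, Finset.mul_sum, Finset.mul_sum, Finset.mul_sum]
          apply Finset.sum_congr rfl
          intro x _
          rw [hu]
          simp only []
          rw [div_pow]
          unfold hIsing
          have : ((x:ℝ) - (m:ℝ)/2)^(i - 2*j) / (C * (m:ℝ))^(i-2*j)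
              = ((x:ℝ) - (m:ℝ)/2)^(i - 2*j) * ((C * (m:ℝ))^(i-2*j))⁻¹ := div_eq_mul_inv _ _
          rw [this]
          have hh : 2 * (x : ℝ) ^ 2 - 2 * (m : ℝ) * (x : ℝ) + (m : ℝ) * ((m : ℝ) - 1) / 2
              = 2 * ((x:ℝ) - (m:ℝ)/2) ^ 2 - (m:ℝ)/2 := by ring
          rw [hh]
          ring
  set F : ℕ → ℝ := fun j => ((2:ℝ)^i)⁻¹ *
      ((-1:ℝ)^j * (i.choose j : ℝ) * ((2*i - 2*j).choose i : ℝ)) *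
      (((C*(m:ℝ))^(i - 2*j))⁻¹ * (((2:ℝ)^m)⁻¹ * A (i - 2*j))) with hF
  have hr2 : i/2 = r := by omega
  rw [hr2] at hS
  have hlast : F r = 0 := by
    rw [hF]
    simp only []
    rw [show i - 2*r = 0 from by omega, hA0]
    ring
  have habs1 : |∑ j ∈ range (r+1), F j| ≤ ∑ j ∈ range r, |F j| := by
    rw [Finset.sum_range_succ, hlast, add_zero]
    exact Finset.abs_sum_le_sum_abs _ _
  have hFj : ∀ j ∈ range r, |F j| ≤
      (Real.sqrt i)⁻¹ * (2 * ((i:ℝ)^2/C^2)) * ((1:ℝ)/2)^(r - 1 - j) := by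
    intro j hj
    have hjr : j < r := Finset.mem_range.mp hj
    set s : ℕ := r - j with hsdef
    have hs1 : 1 ≤ s := by omega
    have he : i - 2*j = 2*s := by omega
    have h2i : 2*i - 2*j = i + 2*s := by omega
    have hcm2s : (0:ℝ) < (C*(m:ℝ))^(2*s) := by positivity
    have hddp := (dd_pos (s+1)).le
    have habs : |F j| = ((2:ℝ)^i)⁻¹ * (i.choose j : ℝ) *
        (((i + 2*s).choose i : ℝ) * (((C*(m:ℝ))^(2*s))⁻¹ * (((2:ℝ)^m)⁻¹ * |A (2*s)|))) := by
      rw [hF]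
      simp only [he, h2i]
      rw [abs_mul, abs_mul]
      rw [abs_mul (((C*(m:ℝ))^(2*s))⁻¹) (((2:ℝ)^m)⁻¹ * A (2*s)),
        abs_mul (((2:ℝ)^m)⁻¹) (A (2*s))]
      rw [abs_mul, abs_mul]
      simp only [abs_inv, abs_pow, abs_neg, abs_one, one_pow, Nat.abs_cast,
        abs_of_pos hCm, abs_of_pos (by norm_num : (0:ℝ) < (2:ℝ))]
      ring
    -- bound pieces
    have hb1 : ((2:ℝ)^i)⁻¹ * (i.choose j : ℝ) ≤ (Real.sqrt i)⁻¹ := by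
      have h := choose_sqrt r j hr1
      rw [← hi2] at h
      exact h
    have hb2 : ((i + 2*s).choose i : ℝ) * ((2*s)! : ℝ) ≤ (((2*i)^(2*s) : ℕ) : ℝ) := by
      have hn1 : (i + 2*s).choose i = (i + 2*s).choose (2*s) := by
        have h1 : 2*s ≤ i + 2*s := by omega
        have h2 : i + 2*s - 2*s = i := by omega
        rw [← Nat.choose_symm h1, h2]
      have hn2 : (i + 2*s).choose (2*s) * (2*s)! ≤ (2*i)^(2*s) := by
        calc (i + 2*s).choose (2*s) * (2*s)! = (i + 2*s).descFactorial (2*s) := by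
              rw [Nat.descFactorial_eq_factorial_mul_choose]
              ring
          _ ≤ (i + 2*s)^(2*s) := Nat.descFactorial_le_pow _ _
          _ ≤ (2*i)^(2*s) := Nat.pow_le_pow_left (by omega) _
      rw [hn1]
      exact_mod_cast hn2
    have hW : ((2:ℝ)^m)⁻¹ * |A (2*s)| ≤ ((m:ℝ)/4)^s * ((m:ℝ) * dd (s+1)) := by
      rw [inv_mul_le_iff₀ (by positivity)]
      calc |A (2*s)| ≤ 2^m * ((m:ℝ)/4)^s * ((m:ℝ) * dd (s+1)) := hAbound s
        _ = 2^m * (((m:ℝ)/4)^s * ((m:ℝ) * dd (s+1))) := by ring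
    have hc2dd : ((i + 2*s).choose i : ℝ) * dd (s+1) ≤ 2 * (((2*i)^(2*s) : ℕ) : ℝ) := by
      calc ((i + 2*s).choose i : ℝ) * dd (s+1)
          ≤ ((i + 2*s).choose i : ℝ) * (2 * ((2*s)! : ℝ)) :=
            mul_le_mul_of_nonneg_left (dd_succ_le s) (Nat.cast_nonneg _)
        _ = 2 * (((i + 2*s).choose i : ℝ) * ((2*s)! : ℝ)) := by ring
        _ ≤ 2 * (((2*i)^(2*s) : ℕ) : ℝ) := by linarith [hb2]
    have hQnn : (0:ℝ) ≤ (i:ℝ)^2/(C^2*(m:ℝ)) := by positivity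
    have hpowid : (((2*i)^(2*s) : ℕ) : ℝ) * ((((C*(m:ℝ))^(2*s))⁻¹ * (((m:ℝ)/4)^s * (m:ℝ))))
        = (m:ℝ) * (((i:ℝ)^2/(C^2*(m:ℝ)))^s) := by
      push_cast
      rw [pow_mul, pow_mul, div_pow]
      rw [show ((2:ℝ)*(i:ℝ))^2 = 4*(i:ℝ)^2 from by ring, show (C*(m:ℝ))^2 = C^2*(m:ℝ)^2 from by ring]
      rw [div_pow]
      field_simp
      ring
    have hmq : (m:ℝ) * (((i:ℝ)^2/(C^2*(m:ℝ)))^s) ≤ ((i:ℝ)^2/C^2) * ((1:ℝ)/2)^(s-1) := by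
      have hss : s = (s-1) + 1 := by omega
      rw [hss, pow_succ]
      have h1 : ((i:ℝ)^2/(C^2*(m:ℝ)))^(s-1) ≤ ((1:ℝ)/2)^(s-1) := pow_le_pow_left₀ hQnn hQ _
      have h2 : (m:ℝ) * (((i:ℝ)^2/(C^2*(m:ℝ)))^(s-1) * ((i:ℝ)^2/(C^2*(m:ℝ))))
          = ((i:ℝ)^2/C^2) * ((i:ℝ)^2/(C^2*(m:ℝ)))^(s-1) := by
        field_simp
      rw [h2]
      exact mul_le_mul_of_nonneg_left h1 (by positivity)
    calc |F j| = (((2:ℝ)^i)⁻¹ * (i.choose j : ℝ)) *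
          (((i + 2*s).choose i : ℝ) * (((C*(m:ℝ))^(2*s))⁻¹ * (((2:ℝ)^m)⁻¹ * |A (2*s)|))) := by
          exact habs
      _ ≤ (Real.sqrt i)⁻¹ *
          (((i + 2*s).choose i : ℝ) * (((C*(m:ℝ))^(2*s))⁻¹ * (((2:ℝ)^m)⁻¹ * |A (2*s)|))) := by
          apply mul_le_mul_of_nonneg_right hb1
          apply mul_nonneg (Nat.cast_nonneg _)
          apply mul_nonneg (by positivity)
          exact mul_nonneg (by positivity) (abs_nonneg _)
      _ ≤ (Real.sqrt i)⁻¹ *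
          (((i + 2*s).choose i : ℝ) * (((C*(m:ℝ))^(2*s))⁻¹ * (((m:ℝ)/4)^s * ((m:ℝ) * dd (s+1))))) := by
          apply mul_le_mul_of_nonneg_left _ (by positivity)
          apply mul_le_mul_of_nonneg_left _ (Nat.cast_nonneg _)
          exact mul_le_mul_of_nonneg_left hW (by positivity)
      _ = (((i + 2*s).choose i : ℝ) * dd (s+1)) *
          ((Real.sqrt i)⁻¹ * (((C*(m:ℝ))^(2*s))⁻¹ * (((m:ℝ)/4)^s * (m:ℝ)))) := by ring
      _ ≤ (2 * (((2*i)^(2*s) : ℕ) : ℝ)) *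
          ((Real.sqrt i)⁻¹ * (((C*(m:ℝ))^(2*s))⁻¹ * (((m:ℝ)/4)^s * (m:ℝ)))) := by
          apply mul_le_mul_of_nonneg_right hc2dd
          apply mul_nonneg (by positivity)
          apply mul_nonneg (by positivity)
          positivity
      _ = (Real.sqrt i)⁻¹ * (2 * ((((2*i)^(2*s) : ℕ) : ℝ) * ((((C*(m:ℝ))^(2*s))⁻¹ * (((m:ℝ)/4)^s * (m:ℝ)))))) := by
          ring
      _ = (Real.sqrt i)⁻¹ * (2 * ((m:ℝ) * (((i:ℝ)^2/(C^2*(m:ℝ)))^s))) := by rw [hpowid]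
      _ ≤ (Real.sqrt i)⁻¹ * (2 * (((i:ℝ)^2/C^2) * ((1:ℝ)/2)^(s-1))) := by
          apply mul_le_mul_of_nonneg_left _ (by positivity)
          exact mul_le_mul_of_nonneg_left hmq (by norm_num)
      _ = (Real.sqrt i)⁻¹ * (2 * ((i:ℝ)^2/C^2)) * ((1:ℝ)/2)^(r - 1 - j) := by
          rw [show s - 1 = r - 1 - j from by omega]
          ring
  have hsum2 : ∑ j ∈ range r, |F j| ≤ (Real.sqrt i)⁻¹ * (2 * ((i:ℝ)^2/C^2)) * 2 := by
    calc ∑ j ∈ range r, |F j|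
        ≤ ∑ j ∈ range r, (Real.sqrt i)⁻¹ * (2 * ((i:ℝ)^2/C^2)) * ((1:ℝ)/2)^(r - 1 - j) :=
          Finset.sum_le_sum hFj
      _ = (Real.sqrt i)⁻¹ * (2 * ((i:ℝ)^2/C^2)) * ∑ j ∈ range r, ((1:ℝ)/2)^(r - 1 - j) := by
          rw [← Finset.mul_sum]
      _ ≤ (Real.sqrt i)⁻¹ * (2 * ((i:ℝ)^2/C^2)) * 2 := by
          apply mul_le_mul_of_nonneg_left _ (by positivity)
          rw [Finset.sum_range_reflect (fun t => ((1:ℝ)/2)^t) r]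
          exact geom_half_le_two r
  rw [hS]
  have hSb : |(range (r+1)).sum F| ≤ (Real.sqrt i)⁻¹ * (4 * ((i:ℝ)^2/C^2)) := by
    calc |(range (r+1)).sum F| ≤ ∑ j ∈ range r, |F j| := habs1
      _ ≤ (Real.sqrt i)⁻¹ * (2 * ((i:ℝ)^2/C^2)) * 2 := hsum2
      _ = (Real.sqrt i)⁻¹ * (4 * ((i:ℝ)^2/C^2)) := by ring
  have h12 : Real.sqrt i = (i:ℝ)^((1:ℝ)/2) := Real.sqrt_eq_rpow _
  have h32 : (i:ℝ)^((3:ℝ)/2) * (i:ℝ)^((1:ℝ)/2) = (i:ℝ)^2 := by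
    rw [← Real.rpow_add hiR]
    norm_num
  have hne : (i:ℝ)^((1:ℝ)/2) ≠ 0 := by
    rw [← h12]
    exact ne_of_gt hsq
  have hfinal : (δ/(m:ℝ)) * ((Real.sqrt i)⁻¹ * (4 * ((i:ℝ)^2/C^2)))
      = 4 * δ * (i:ℝ)^((3:ℝ)/2) / (C^2*(m:ℝ)) := by
    rw [← h32, h12]
    field_simp
  calc (δ/(m:ℝ)) * |(range (r+1)).sum F|
      ≤ (δ/(m:ℝ)) * ((Real.sqrt i)⁻¹ * (4 * ((i:ℝ)^2/C^2))) :=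
        mul_le_mul_of_nonneg_left hSb (by positivity)
    _ = 4 * δ * (i:ℝ)^((3:ℝ)/2) / (C^2*(m:ℝ)) := hfinal
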